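/- Let S = S_ndeg ⊕ S₀ with S_ndeg invertible and S₀ the zero matrix, and ξ ∈ S¹ \ {1}. If ξ is not a root of Δ(t) = det(S_ndeg·t + (-1)ⁿ S_ndegᵀ), then the nullity of (1-ξ)S + (-1)^{n+1}(1-ξ̄)Sᵀ equals the size n₀ of S₀; if ξ is a root of Δ, the nullity is strictly greater than n₀. -/

import Mathlib

open Matrix

/-- Levine–Tristram form `(1-ξ)S + (-1)^{n+1}(1-ξ̄)Sᵀ`. -/
noncomputable def LTform {ι : Type*} [Fintype ι] (S : Matrix ι ι ℂ) (n : ℕ) (ξ : ℂ) :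
    Matrix ι ι ℂ :=
  (1 - ξ) • S + ((-1 : ℂ) ^ (n + 1) * (1 - (starRingEnd ℂ) ξ)) • Sᵀ

/-- Signature of a Hermitian matrix: number of positive minus number of negative
eigenvalues. -/
noncomputable def matSig {ι : Type*} [Fintype ι] [DecidableEq ι]
    {A : Matrix ι ι ℂ} (hA : A.IsHermitian) : ℤ :=
  ((Finset.univ.filter fun i => 0 < hA.eigenvalues i).card : ℤ) -
  ((Finset.univ.filter fun i => hA.eigenvalues i < 0).card : ℤ)

/-- Nullity of a matrix: dimension of its kernel. -/
noncomputable def matNullity {ι : Type*} [Fintype ι] (A : Matrix ι ι ℂ) : ℕ :=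
  Module.finrank ℂ (LinearMap.ker A.mulVecLin)

set_option linter.unusedVariables false in
def prodEquivAux {R M M₂ : Type*} [Ring R] [AddCommGroup M] [AddCommGroup M₂]
    [Module R M] [Module R M₂] (p : Submodule R M) (q : Submodule R M₂) :
    (p.prod q) ≃ₗ[R] p × q where
  toFun x := (⟨x.1.1, x.2.1⟩, ⟨x.1.2, x.2.2⟩)
  invFun x := ⟨(x.1.1, x.2.1), ⟨x.1.2, x.2.2⟩⟩
  map_add' x y := rfl
  map_smul' c x := rfl
  left_inv x := rfl
  right_inv x := rfl

lemma finrank_prod_submodule {R M M₂ : Type*} [Field R] [AddCommGroup M] [AddCommGroup M₂]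
    [Module R M] [Module R M₂] [FiniteDimensional R M] [FiniteDimensional R M₂]
    (p : Submodule R M) (q : Submodule R M₂) :
    Module.finrank R (p.prod q) = Module.finrank R p + Module.finrank R q := by
  rw [(prodEquivAux p q).finrank_eq, Module.finrank_prod]

lemma nullity_fromBlocks {k n₀ : ℕ} (M : Matrix (Fin k) (Fin k) ℂ) :
    matNullity (fromBlocks M 0 0 (0 : Matrix (Fin n₀) (Fin n₀) ℂ)) = matNullity M + n₀ := by
  set e := LinearEquiv.sumArrowLequivProdArrow (Fin k) (Fin n₀) ℂ ℂ with he
  set h := M.mulVecLin.prodMap (0 : (Fin n₀ → ℂ) →ₗ[ℂ] (Fin n₀ → ℂ)) with hh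
  have key : (fromBlocks M 0 0 (0 : Matrix (Fin n₀) (Fin n₀) ℂ)).mulVecLin =
      e.symm.toLinearMap ∘ₗ h ∘ₗ e.toLinearMap := by
    apply LinearMap.ext
    intro v
    funext i
    cases i with
    | inl i =>
        simp [he, hh, mulVec, dotProduct, Fintype.sum_sum_type, fromBlocks,
          LinearEquiv.sumArrowLequivProdArrow]
    | inr i =>
        simp [he, hh, mulVec, dotProduct, Fintype.sum_sum_type, fromBlocks,
          LinearEquiv.sumArrowLequivProdArrow]
  rw [matNullity, key, LinearMap.ker_comp, LinearEquiv.ker, Submodule.comap_bot,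
    LinearMap.ker_comp, Submodule.comap_equiv_eq_map_symm,
    LinearEquiv.finrank_map_eq, hh, LinearMap.ker_prodMap,
    finrank_prod_submodule, LinearMap.ker_zero, finrank_top, Module.finrank_pi,
    Fintype.card_fin]
  rfl

lemma nullity_smul {ι : Type*} [Fintype ι] (A : Matrix ι ι ℂ) {c : ℂ} (hc : c ≠ 0) :
    matNullity (c • A) = matNullity A := by
  unfold matNullity
  have hk : LinearMap.ker (c • A).mulVecLin = LinearMap.ker A.mulVecLin := by
    ext v
    simp only [LinearMap.mem_ker, mulVecLin_apply, smul_mulVec]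
    constructor
    · intro hv
      simpa [hc] using hv
    · intro hv; simp [hv]
  rw [hk]

theorem stmt3 {k n₀ : ℕ} (Snd : Matrix (Fin k) (Fin k) ℂ) (hSnd : IsUnit Snd.det)
    (n : ℕ) (ξ : ℂ) (hξ : ‖ξ‖ = 1) (hξ1 : ξ ≠ 1)
    (S : Matrix (Fin k ⊕ Fin n₀) (Fin k ⊕ Fin n₀) ℂ)
    (hS : S = Matrix.fromBlocks Snd 0 0 (0 : Matrix (Fin n₀) (Fin n₀) ℂ)) :
    ((ξ • Snd + ((-1 : ℂ) ^ n) • Sndᵀ).det ≠ 0 → matNullity (LTform S n ξ) = n₀) ∧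
    ((ξ • Snd + ((-1 : ℂ) ^ n) • Sndᵀ).det = 0 → n₀ < matNullity (LTform S n ξ)) := by
  have hξ0 : ξ ≠ 0 := by
    intro h; rw [h] at hξ; simp at hξ
  have hconj : (starRingEnd ℂ) ξ = ξ⁻¹ := by
    have h1 : ξ * (starRingEnd ℂ) ξ = 1 := by
      rw [Complex.mul_conj]
      rw [Complex.normSq_eq_norm_sq, hξ]
      norm_num
    field_simp
    linear_combination h1
  set M : Matrix (Fin k) (Fin k) ℂ := ξ • Snd + ((-1 : ℂ) ^ n) • Sndᵀ with hM
  have hc : (1 - ξ) / ξ ≠ 0 := div_ne_zero (sub_ne_zero.mpr (Ne.symm hξ1)) hξ0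
  have hLT : LTform S n ξ = fromBlocks (((1 - ξ) / ξ) • M) 0 0 0 := by
    subst hS
    ext i j
    cases i with
    | inl i =>
        cases j with
        | inl j =>
            simp only [LTform, hM, Matrix.add_apply, Matrix.smul_apply, transpose_apply,
              fromBlocks_apply₁₁, fromBlocks_transpose, smul_eq_mul, hconj]
            rw [pow_succ]
            field_simp
            ring
        | inr j => simp [LTform, fromBlocks]
    | inr i =>
        cases j with
        | inl j => simp [LTform, fromBlocks]
        | inr j => simp [LTform, fromBlocks]
  have hnull : matNullity (LTform S n ξ) = matNullity M + n₀ := by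
    rw [hLT, nullity_fromBlocks, nullity_smul M hc]
  constructor
  · intro hdet
    have hker : LinearMap.ker M.mulVecLin = ⊥ := by
      rw [Matrix.ker_mulVecLin_eq_bot_iff]
      intro v hv
      by_contra hv0
      exact hdet ((Matrix.exists_mulVec_eq_zero_iff).mp ⟨v, hv0, hv⟩)
    rw [hnull, matNullity, hker, finrank_bot, zero_add]
  · intro hdet
    obtain ⟨v, hv0, hv⟩ := (Matrix.exists_mulVec_eq_zero_iff).mpr hdet
    have hpos : 0 < matNullity M := by
      rw [matNullity, Nat.pos_iff_ne_zero]
      intro h0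
      rw [Submodule.finrank_eq_zero] at h0
      exact hv0 (by simpa [h0] using (LinearMap.mem_ker.mpr (by simpa using hv) :
        v ∈ LinearMap.ker M.mulVecLin))
    omega
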